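/- Let G be a finite group. Then the number of group homomorphisms from ℤ × ℤ to G equals |G| times the number of conjugacy classes of G. -/

import Mathlib

noncomputable def homEquivCommute {G : Type*} [Group G] :
    (Multiplicative (ℤ × ℤ) →* G) ≃ { p : G × G // Commute p.1 p.2 } where
  toFun f := ⟨(f (Multiplicative.ofAdd (1, 0)), f (Multiplicative.ofAdd (0, 1))), by
    unfold Commute SemiconjBy
    rw [← f.map_mul, ← f.map_mul]
    congr 1⟩
  invFun p :=
    { toFun := fun x => p.1.1 ^ (Multiplicative.toAdd x).1 * p.1.2 ^ (Multiplicative.toAdd x).2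
      map_one' := by simp
      map_mul' := by
        intro x y
        have hc := p.2
        show p.1.1 ^ (Multiplicative.toAdd (x*y)).1 * p.1.2 ^ (Multiplicative.toAdd (x*y)).2 =
          (p.1.1 ^ (Multiplicative.toAdd x).1 * p.1.2 ^ (Multiplicative.toAdd x).2) *
          (p.1.1 ^ (Multiplicative.toAdd y).1 * p.1.2 ^ (Multiplicative.toAdd y).2)
        have h1 : Multiplicative.toAdd (x * y) = Multiplicative.toAdd x + Multiplicative.toAdd y := rfl
        rw [h1, Prod.fst_add, Prod.snd_add, zpow_add, zpow_add,
          mul_assoc, mul_assoc, ← mul_assoc ((p.1.2) ^ (Multiplicative.toAdd x).2)]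
        congr 1
        rw [← mul_assoc, (hc.zpow_zpow _ _).eq] }
  left_inv f := by
    ext x
    show f (Multiplicative.ofAdd (1, 0)) ^ (Multiplicative.toAdd x).1 *
      f (Multiplicative.ofAdd (0, 1)) ^ (Multiplicative.toAdd x).2 = f x
    rw [← f.map_zpow, ← f.map_zpow, ← f.map_mul]
    congr 1
    rw [← ofAdd_zsmul, ← ofAdd_zsmul, ← ofAdd_add]
    simp [Prod.ext_iff]
    rfl
  right_inv p := by
    ext <;> simp

theorem stmt_3 {G : Type*} [Group G] [Finite G] :
    Nat.card (Multiplicative (ℤ × ℤ) →* G) =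
      Nat.card G * Nat.card (ConjClasses G) := by
  rw [Nat.card_congr homEquivCommute, card_comm_eq_card_conjClasses_mul_card, mul_comm]
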